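/- Let G = Z_p^2 × Z_q with p, q distinct primes and (S, Λ) a spectral pair with gcd(|G|,|S|) = pq and |S| = pq. If some Z_p^2-coset of G contains at least p+1 elements of S, then p^2 divides |S|, a contradiction; hence each Z_p^2-coset contains exactly p elements of S, there is a nonzero a ∈ Z_p^2 such that no nonzero multiple of (a,0) lies in S − S, and S tiles G with tiling complement the cyclic subgroup generated by (a,0). -/
import Mathlib


open Complex Finset

noncomputable def chiZp2 (p : ℕ) (a u : ZMod p × ZMod p) : ℂ :=
  Complex.exp (2 * Real.pi * Complex.I * (((u.1 * a.1 + u.2 * a.2 : ZMod p).val : ℂ) / p))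

noncomputable def chiG (p q : ℕ) (l x : (ZMod p × ZMod p) × ZMod q) : ℂ :=
  chiZp2 p l.1 x.1 *
    Complex.exp (2 * Real.pi * Complex.I * (((x.2 * l.2 : ZMod q).val : ℂ) / q))

def IsSpectrum (p q : ℕ) [NeZero p] [NeZero q]
    (S Λ : Finset ((ZMod p × ZMod p) × ZMod q)) : Prop :=
  Λ.card = S.card ∧ ∀ l ∈ Λ, ∀ l' ∈ Λ, l ≠ l' →
    ∑ x ∈ S, chiG p q l x * (starRingEnd ℂ) (chiG p q l' x) = 0

def IsSpectral (p q : ℕ) [NeZero p] [NeZero q]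
    (S : Finset ((ZMod p × ZMod p) × ZMod q)) : Prop :=
  ∃ Λ, IsSpectrum p q S Λ

def Tiles (p q : ℕ) [NeZero p] [NeZero q]
    (S : Finset ((ZMod p × ZMod p) × ZMod q)) : Prop :=
  ∃ T : Finset ((ZMod p × ZMod p) × ZMod q),
    S.card * T.card = Fintype.card ((ZMod p × ZMod p) × ZMod q) ∧
    ∀ g, ∃ s ∈ S, ∃ t ∈ T, s + t = g

namespace CasePQAux
open Polynomial


noncomputable def zeta (p : ℕ) : ℂ := Complex.exp (2 * Real.pi * Complex.I / p)

noncomputable def ep (p : ℕ) (x : ZMod p) : ℂ :=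
  Complex.exp (2 * Real.pi * Complex.I * ((x.val : ℂ) / p))

variable {p : ℕ} [hp : Fact p.Prime]

lemma zeta_prim : IsPrimitiveRoot (zeta p) p :=
  Complex.isPrimitiveRoot_exp p hp.out.ne_zero

lemma ep_eq_pow (x : ZMod p) : ep p x = zeta p ^ x.val := by
  rw [ep, zeta, ← Complex.exp_nat_mul]
  congr 1
  ring

lemma zeta_pow_mod (a : ℕ) : zeta p ^ (a % p) = zeta p ^ a := by
  conv_rhs => rw [← Nat.mod_add_div a p]
  rw [pow_add, pow_mul, zeta_prim.pow_eq_one, one_pow, mul_one]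

lemma ep_add (x y : ZMod p) : ep p (x + y) = ep p x * ep p y := by
  rw [ep_eq_pow, ep_eq_pow, ep_eq_pow, ← pow_add, ZMod.val_add, zeta_pow_mod]

lemma ep_zero : ep p 0 = 1 := by
  rw [ep_eq_pow, ZMod.val_zero, pow_zero]

lemma ep_neg (x : ZMod p) : ep p (-x) = (ep p x)⁻¹ :=
  eq_inv_of_mul_eq_one_left (by rw [← ep_add, neg_add_cancel, ep_zero])

lemma conj_ep (x : ZMod p) : (starRingEnd ℂ) (ep p x) = ep p (-x) := by
  rw [ep_neg, ep, ← Complex.exp_conj, ← Complex.exp_neg]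
  congr 1
  simp only [map_mul, map_div₀, Complex.conj_I, Complex.conj_natCast, Complex.conj_ofReal,
    map_ofNat]
  ring

lemma sum_range_eq (f : ZMod p → ℂ) :
    ∑ i ∈ range p, f (i : ZMod p) = ∑ x : ZMod p, f x := by
  exact Finset.sum_nbij' (fun i => (i : ZMod p)) (fun x => x.val)
    (fun a _ => mem_univ _) (fun a _ => mem_range.2 (ZMod.val_lt _))
    (fun a ha => ZMod.val_cast_of_lt (mem_range.1 ha))
    (fun a _ => ZMod.natCast_rightInverse a) (fun a _ => rfl)

lemma sum_ep : ∑ x : ZMod p, ep p x = 0 := by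
  have h := sum_range_eq (p := p) (ep p)
  rw [← h]
  have : ∀ i ∈ range p, ep p ((i : ℕ) : ZMod p) = zeta p ^ i := by
    intro i hi
    rw [ep_eq_pow, ZMod.val_cast_of_lt (mem_range.1 hi)]
  rw [Finset.sum_congr rfl this, geom_sum_eq (zeta_prim.ne_one hp.out.one_lt), zeta_prim.pow_eq_one]
  simp


lemma coeff_geom (j : ℕ) (hj : j < p) : (∑ i ∈ range p, (X : ℚ[X]) ^ i).coeff j = 1 := by
  rw [finset_sum_coeff]
  simp only [coeff_X_pow]
  rw [Finset.sum_eq_single j (fun b _ hb => if_neg (fun h => hb h.symm)) 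
    (fun h => absurd (mem_range.2 hj) h)]
  simp

lemma eq_of_sum_ep (m : ZMod p → ℕ)
    (h : ∑ r : ZMod p, (m r : ℂ) * ep p r = 0) (r : ZMod p) : m r = m 0 := by
  have hζ : IsPrimitiveRoot (zeta p) p := zeta_prim
  set f : ℚ[X] := ∑ i ∈ range p, C (m (i : ZMod p) : ℚ) * X ^ i with hf
  have hcoeff : ∀ j < p, f.coeff j = (m ((j : ℕ) : ZMod p) : ℚ) := by
    intro j hj
    rw [hf, finset_sum_coeff]
    simp only [coeff_C_mul, coeff_X_pow]
    rw [Finset.sum_eq_single j (fun b _ hb => by rw [if_neg (fun h => hb h.symm), mul_zero])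
      (fun h => absurd (mem_range.2 hj) h)]
    simp
  have heval : aeval (zeta p) f = 0 := by
    rw [hf, map_sum]
    have : ∀ i ∈ range p, aeval (zeta p) (C (m (i : ZMod p) : ℚ) * X ^ i)
        = (m (i : ZMod p) : ℂ) * ep p ((i : ℕ) : ZMod p) := by
      intro i hi
      rw [map_mul, map_pow, aeval_X, aeval_C, ep_eq_pow, ZMod.val_cast_of_lt (mem_range.1 hi)]
      norm_num
    rw [Finset.sum_congr rfl this, sum_range_eq (fun x => (m x : ℂ) * ep p x), h]
  have hdvd : cyclotomic p ℚ ∣ f := by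
    rw [cyclotomic_eq_minpoly_rat hζ hp.out.pos]
    exact minpoly.dvd ℚ (zeta p) heval
  obtain ⟨g, hg⟩ := hdvd
  have hcyc0 : cyclotomic p ℚ ≠ 0 := cyclotomic_ne_zero p ℚ
  have hdegc : (cyclotomic p ℚ).natDegree = p - 1 := by
    rw [natDegree_cyclotomic, Nat.totient_prime hp.out]
  -- key : coefficients of f are all equal for j < p
  have key : ∀ j < p, f.coeff j = f.coeff 0 := by
    rcases eq_or_ne g 0 with hg0 | hg0
    · intro j _; simp [hg, hg0]
    · have hdegf : f.natDegree ≤ p - 1 := by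
        rw [hf]
        refine natDegree_sum_le_of_forall_le _ _ (fun i hi => ?_)
        exact le_trans (natDegree_C_mul_le _ _)
          (le_trans (natDegree_X_pow_le _) (Nat.le_sub_one_of_lt (mem_range.1 hi)))
      have hdegg : g.natDegree = 0 := by
        have := natDegree_mul hcyc0 hg0
        rw [← hg, hdegc] at this
        omega
      obtain ⟨c, rfl⟩ := natDegree_eq_zero.mp hdegg
      intro j hj
      rw [hg, cyclotomic_prime ℚ p, mul_comm, coeff_C_mul, coeff_C_mul,
        coeff_geom j hj, coeff_geom 0 hp.out.pos]
  have h1 : (m r : ℚ) = (m 0 : ℚ) := by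
    have h2 := key r.val (ZMod.val_lt r)
    rw [hcoeff r.val (ZMod.val_lt r), hcoeff 0 hp.out.pos] at h2
    rw [ZMod.natCast_rightInverse r] at h2
    simpa using h2
  exact_mod_cast h1

lemma sum_ep_fiber {ι : Type*} [DecidableEq (ZMod p)] (T : Finset ι) (g : ι → ZMod p) (F : ZMod p → ℂ) :
    ∑ t ∈ T, F (g t) = ∑ r : ZMod p, ((T.filter fun t => g t = r).card : ℂ) * F r := by
  rw [← Finset.sum_fiberwise' T g F]
  refine Finset.sum_congr rfl fun r _ => ?_
  rw [Finset.sum_const, nsmul_eq_mul]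

lemma sum_ep_linear {ι : Type*} (T : Finset ι) (g : ι → ZMod p)
    (h0 : ∑ t ∈ T, ep p (g t) = 0) {c : ZMod p} (hc : c ≠ 0) :
    ∑ t ∈ T, ep p (c * g t) = 0 := by
  classical
  set m : ZMod p → ℕ := fun r => (T.filter fun t => g t = r).card with hm
  have hmc : ∀ r, m r = m 0 := by
    refine eq_of_sum_ep m ?_
    rw [← h0, sum_ep_fiber T g (ep p)]
  have h1 : ∑ t ∈ T, ep p (c * g t) = ∑ r : ZMod p, (m r : ℂ) * ep p (c * r) :=
    sum_ep_fiber T g (fun r => ep p (c * r))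
  rw [h1]
  have h2 : ∀ r : ZMod p, (m r : ℂ) * ep p (c * r) = (m 0 : ℂ) * ep p (c * r) := by
    intro r; rw [hmc r]
  rw [Finset.sum_congr rfl (fun r _ => h2 r), ← Finset.mul_sum]
  have h3 : ∑ r : ZMod p, ep p (c * r) = ∑ r : ZMod p, ep p r :=
    Equiv.sum_comp (Equiv.mulLeft₀ c hc) (ep p)
  rw [h3, sum_ep, mul_zero]

lemma sum_ep_mul_right (v : ZMod p) :
    ∑ c : ZMod p, ep p (c * v) = if v = 0 then (p : ℂ) else 0 := by
  split_ifs with hv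
  · subst hv
    simp only [mul_zero, ep_zero]
    rw [Finset.sum_const, card_univ, ZMod.card, nsmul_eq_mul, mul_one]
  · have h3 : ∑ c : ZMod p, ep p (c * v) = ∑ c : ZMod p, ep p c :=
      Equiv.sum_comp (Equiv.mulRight₀ v hv) (ep p)
    rw [h3, sum_ep]

end CasePQAux

section ChiLemmas
open CasePQAux
variable {p q : ℕ} [hp : Fact p.Prime] [hq : Fact q.Prime]

lemma chiG_eq (l x : (ZMod p × ZMod p) × ZMod q) :
    chiG p q l x = ep p (x.1.1 * l.1.1 + x.1.2 * l.1.2) * ep q (x.2 * l.2) := rfl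

lemma chiG_add_x (l x y : (ZMod p × ZMod p) × ZMod q) :
    chiG p q l (x + y) = chiG p q l x * chiG p q l y := by
  simp only [chiG_eq, Prod.fst_add, Prod.snd_add, add_mul, ep_add]
  ring

lemma chiG_zero_x (l : (ZMod p × ZMod p) × ZMod q) : chiG p q l 0 = 1 := by
  simp [chiG_eq, ep_zero]

lemma conj_chiG (l x : (ZMod p × ZMod p) × ZMod q) :
    (starRingEnd ℂ) (chiG p q l x) = chiG p q l (-x) := by
  simp only [chiG_eq, map_mul, conj_ep, Prod.fst_neg, Prod.snd_neg]
  rw [show -(x.1.1 * l.1.1 + x.1.2 * l.1.2) = -x.1.1 * l.1.1 + -x.1.2 * l.1.2 by ring,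
    show -(x.2 * l.2) = -x.2 * l.2 by ring]

lemma chiG_mul_conj_self (l x : (ZMod p × ZMod p) × ZMod q) :
    chiG p q l x * (starRingEnd ℂ) (chiG p q l x) = 1 := by
  rw [conj_chiG, ← chiG_add_x, add_neg_cancel, chiG_zero_x]

lemma col_orth {S Λ : Finset ((ZMod p × ZMod p) × ZMod q)}
    (hpair : IsSpectrum p q S Λ) (hS0 : S.card ≠ 0) :
    ∀ x ∈ S, ∀ x' ∈ S, x ≠ x' →
      ∑ l ∈ Λ, chiG p q l x * (starRingEnd ℂ) (chiG p q l x') = 0 := by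
  classical
  set n := S.card with hn
  let eS : ↥S ≃ Fin n := S.equivFin
  let eΛ : ↥Λ ≃ Fin n := Λ.equivFin.trans (finCongr hpair.1)
  set M : Matrix (Fin n) (Fin n) ℂ :=
    Matrix.of fun i j => chiG p q (eΛ.symm i).1 (eS.symm j).1 with hM
  have hsum1 : ∀ i i' : Fin n,
      ∑ j : Fin n, chiG p q (eΛ.symm i).1 (eS.symm j).1 *
        (starRingEnd ℂ) (chiG p q (eΛ.symm i').1 (eS.symm j).1)
      = ∑ x ∈ S, chiG p q (eΛ.symm i).1 x * (starRingEnd ℂ) (chiG p q (eΛ.symm i').1 x) := by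
    intro i i'
    rw [← Finset.sum_coe_sort S
      (fun x => chiG p q (eΛ.symm i).1 x * (starRingEnd ℂ) (chiG p q (eΛ.symm i').1 x))]
    exact Equiv.sum_comp eS.symm
      (fun y => chiG p q (eΛ.symm i).1 y.1 * (starRingEnd ℂ) (chiG p q (eΛ.symm i').1 y.1))
  have hrow : M * M.conjTranspose = (n : ℂ) • 1 := by
    ext i i'
    simp only [Matrix.mul_apply, Matrix.conjTranspose_apply, hM, Matrix.of_apply,
      Matrix.smul_apply, Matrix.one_apply, smul_eq_mul, Complex.star_def]
    rw [hsum1 i i']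
    by_cases hii : i = i'
    · subst hii
      rw [if_pos rfl, mul_one]
      rw [Finset.sum_congr rfl (fun x _ => chiG_mul_conj_self (eΛ.symm i).1 x)]
      simp [hn]
    · rw [if_neg hii, mul_zero]
      refine hpair.2 _ (eΛ.symm i).2 _ (eΛ.symm i').2 ?_
      intro hcontra
      exact hii (by simpa using eΛ.symm.injective (Subtype.ext hcontra))
  have hnC : (n : ℂ) ≠ 0 := Nat.cast_ne_zero.mpr hS0
  have hMN : M * ((n : ℂ)⁻¹ • M.conjTranspose) = 1 := by
    rw [Matrix.mul_smul, hrow, smul_smul, inv_mul_cancel₀ hnC, one_smul]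
  have hNM : ((n : ℂ)⁻¹ • M.conjTranspose) * M = 1 := mul_eq_one_comm.mp hMN
  have hcol : M.conjTranspose * M = (n : ℂ) • 1 := by
    calc M.conjTranspose * M = (n : ℂ) • (((n : ℂ)⁻¹ • M.conjTranspose) * M) := by
          rw [Matrix.smul_mul, smul_smul, mul_inv_cancel₀ hnC, one_smul]
      _ = (n : ℂ) • 1 := by rw [hNM]
  intro x hx x' hx' hne
  have hjj : eS ⟨x, hx⟩ ≠ eS ⟨x', hx'⟩ := by
    intro hcontra
    exact hne (by simpa using congrArg Subtype.val (eS.injective hcontra))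
  have hentry := congrFun (congrFun hcol (eS ⟨x, hx⟩)) (eS ⟨x', hx'⟩)
  simp only [Matrix.mul_apply, Matrix.conjTranspose_apply, hM, Matrix.of_apply,
    Matrix.smul_apply, Matrix.one_apply, if_neg hjj, smul_eq_mul, mul_zero,
    Equiv.symm_apply_apply, Complex.star_def] at hentry
  have hentry2 : ∑ l ∈ Λ, (starRingEnd ℂ) (chiG p q l x) * chiG p q l x' = 0 := by
    rw [← hentry]
    rw [← Finset.sum_coe_sort Λ (fun l => (starRingEnd ℂ) (chiG p q l x) * chiG p q l x')]
    exact (Equiv.sum_comp eΛ.symm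
      (fun l => (starRingEnd ℂ) (chiG p q l.1 x) * chiG p q l.1 x')).symm
  have := congrArg (starRingEnd ℂ) hentry2
  simpa [map_sum, mul_comm] using this


lemma smul_prod_ne_zero {c : ZMod p} {a : ZMod p × ZMod p} (hc : c ≠ 0) (ha : a ≠ 0) :
    c • a ≠ 0 := by
  intro h
  apply ha
  have h1 : c * a.1 = 0 := congrArg Prod.fst h
  have h2 : c * a.2 = 0 := congrArg Prod.snd h
  have : a.1 = 0 := by rcases mul_eq_zero.mp h1 with h | h; exact absurd h hc; exact h
  have : a.2 = 0 := by rcases mul_eq_zero.mp h2 with h | h; exact absurd h hc; exact h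
  exact Prod.ext ‹a.1 = 0› ‹a.2 = 0›

lemma line_of_det {a : ZMod p × ZMod p} (ha : a ≠ 0)
    (u : ZMod p × ZMod p) (h : u.1 * a.2 = u.2 * a.1) : ∃ c : ZMod p, u = c • a := by
  by_cases h1 : a.1 = 0
  · have h2 : a.2 ≠ 0 := fun h2 => ha (Prod.ext h1 h2)
    have hu1 : u.1 = 0 := by
      have := h
      rw [h1, mul_zero] at this
      rcases mul_eq_zero.mp this with h' | h'
      · exact h'
      · exact absurd h' h2
    refine ⟨u.2 * a.2⁻¹, Prod.ext ?_ ?_⟩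
    · simp [h1, hu1]
    · show u.2 = u.2 * a.2⁻¹ * a.2
      field_simp
  · refine ⟨u.1 * a.1⁻¹, Prod.ext ?_ ?_⟩
    · show u.1 = u.1 * a.1⁻¹ * a.1
      field_simp
    · show u.2 = u.1 * a.1⁻¹ * a.2
      field_simp
      linear_combination -h

lemma no_all_directions (hpq : p ≠ q)
    {S Λ : Finset ((ZMod p × ZMod p) × ZMod q)}
    (hpair : IsSpectrum p q S Λ) (hcard : S.card = p * q)
    (H : ∀ a : ZMod p × ZMod p, a ≠ 0 → ∃ s ∈ S, ∃ s' ∈ S, s ≠ s' ∧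
      ∃ c : ZMod p, c ≠ 0 ∧ s - s' = (c • a, (0 : ZMod q))) : False := by
  classical
  have hΛcard : Λ.card = p * q := hpair.1.trans hcard
  have hS0 : S.card ≠ 0 := by
    rw [hcard]; exact Nat.mul_ne_zero hp.out.ne_zero hq.out.ne_zero
  have col := col_orth hpair hS0
  have key : ∀ a : ZMod p × ZMod p, a ≠ 0 →
      ∑ l ∈ Λ, ep p (a.1 * l.1.1 + a.2 * l.1.2) = 0 := by
    intro a ha
    obtain ⟨s, hs, s', hs', hne, c, hc, hdiff⟩ := H a ha
    have h1 : ∑ l ∈ Λ, chiG p q l s * (starRingEnd ℂ) (chiG p q l s') = 0 := col s hs s' hs' hne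
    have h2 : ∑ l ∈ Λ, chiG p q l ((c • a, (0 : ZMod q))) = 0 := by
      rw [← h1]
      refine Finset.sum_congr rfl fun l _ => ?_
      rw [conj_chiG, ← chiG_add_x, ← sub_eq_add_neg, hdiff]
    have h3 : ∑ l ∈ Λ, ep p (c * (a.1 * l.1.1 + a.2 * l.1.2)) = 0 := by
      rw [← h2]
      refine Finset.sum_congr rfl fun l _ => ?_
      rw [chiG_eq]
      show ep p (c * (a.1 * l.1.1 + a.2 * l.1.2))
        = ep p ((c • a, (0 : ZMod q)).1.1 * l.1.1 + (c • a, (0 : ZMod q)).1.2 * l.1.2)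
          * ep q ((c • a, (0 : ZMod q)).2 * l.2)
      have hq0 : ((c • a, (0 : ZMod q)).2 * l.2 : ZMod q) = 0 := zero_mul _
      rw [hq0, ep_zero, mul_one]
      congr 1
      show c * (a.1 * l.1.1 + a.2 * l.1.2) = (c • a).1 * l.1.1 + (c • a).2 * l.1.2
      simp only [Prod.smul_fst, Prod.smul_snd, smul_eq_mul]
      ring
    have h4 := sum_ep_linear Λ (fun l => c * (a.1 * l.1.1 + a.2 * l.1.2)) h3 (inv_ne_zero hc)
    have h5 : ∀ l ∈ Λ, ep p (c⁻¹ * (c * (a.1 * l.1.1 + a.2 * l.1.2)))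
        = ep p (a.1 * l.1.1 + a.2 * l.1.2) := by
      intro l _
      rw [← mul_assoc, inv_mul_cancel₀ hc, one_mul]
    rw [Finset.sum_congr rfl h5] at h4
    exact h4
  have big : ∑ a : ZMod p × ZMod p, ∑ l ∈ Λ, ep p (a.1 * l.1.1 + a.2 * l.1.2)
      = ((p * q : ℕ) : ℂ) := by
    rw [Finset.sum_eq_single_of_mem (0 : ZMod p × ZMod p) (mem_univ _)
      (fun a _ ha => key a ha)]
    have : ∀ l ∈ Λ, ep p ((0 : ZMod p × ZMod p).1 * l.1.1 + (0 : ZMod p × ZMod p).2 * l.1.2)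
        = 1 := by
      intro l _
      rw [show ((0 : ZMod p × ZMod p).1 * l.1.1 + (0 : ZMod p × ZMod p).2 * l.1.2 : ZMod p)
        = 0 by simp, ep_zero]
    rw [Finset.sum_congr rfl this, Finset.sum_const, hΛcard]
    simp
  have inner : ∀ v : ZMod p × ZMod p, ∑ a : ZMod p × ZMod p, ep p (a.1 * v.1 + a.2 * v.2)
      = (if v.1 = 0 ∧ v.2 = 0 then ((p : ℂ) * p) else 0) := by
    intro v
    rw [Fintype.sum_prod_type]
    have : ∀ a1 a2 : ZMod p, ep p (a1 * v.1 + a2 * v.2) = ep p (a1 * v.1) * ep p (a2 * v.2) :=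
      fun a1 a2 => ep_add _ _
    simp_rw [this]
    rw [← Finset.sum_mul_sum]
    rw [sum_ep_mul_right v.1, sum_ep_mul_right v.2]
    by_cases h1 : v.1 = 0 <;> by_cases h2 : v.2 = 0 <;> simp [h1, h2]
  have big2 : ∑ l ∈ Λ, (if l.1.1 = 0 ∧ l.1.2 = 0 then ((p : ℂ) * p) else 0)
      = ((p * q : ℕ) : ℂ) := by
    rw [← big, Finset.sum_comm]
    exact Finset.sum_congr rfl fun l _ => (inner l.1).symm
  set N := (Λ.filter fun l => l.1.1 = 0 ∧ l.1.2 = 0).card with hN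
  have big3 : ((p * q : ℕ) : ℂ) = (N : ℂ) * ((p : ℂ) * p) := by
    rw [← big2, ← Finset.sum_filter, Finset.sum_const, ← hN, nsmul_eq_mul]
  have big4 : p * q = N * (p * p) := by
    have := big3
    rw [show ((N : ℂ) * ((p : ℂ) * p)) = ((N * (p * p) : ℕ) : ℂ) by push_cast; ring] at this
    exact_mod_cast this
  have hdvd : p ∣ q := by
    have hq' : q = N * p := by
      have hp0 : 0 < p := hp.out.pos
      have : p * q = p * (N * p) := by rw [big4]; ring
      exact Nat.eq_of_mul_eq_mul_left hp0 this
    exact Dvd.intro _ (by rw [hq', mul_comm])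
  exact hpq ((Nat.prime_dvd_prime_iff_eq hp.out hq.out).mp hdvd)

end ChiLemmas

set_option maxHeartbeats 2000000 in
theorem case_pq_spectral_tile (p q : ℕ) [Fact p.Prime] [Fact q.Prime] (hpq : p ≠ q)
    (S Λ : Finset ((ZMod p × ZMod p) × ZMod q))
    (hpair : IsSpectrum p q S Λ)
    (hgcd : Nat.gcd (Fintype.card ((ZMod p × ZMod p) × ZMod q)) S.card = p * q)
    (hcard : S.card = p * q) :
    (∀ v : ZMod q, (S.filter fun s => s.2 = v).card = p) ∧
    ∃ a : ZMod p × ZMod p, a ≠ 0 ∧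
      (∀ s ∈ S, ∀ s' ∈ S, s ≠ s' → ∀ c : ZMod p, c ≠ 0 →
        s - s' ≠ ((c • a, (0 : ZMod q)) : (ZMod p × ZMod p) × ZMod q)) ∧
      (∀ g : (ZMod p × ZMod p) × ZMod q,
        ∃ s ∈ S, ∃ c : ZMod p, s + ((c • a, (0 : ZMod q)) : (ZMod p × ZMod p) × ZMod q) = g) := by
  classical
  have fiber_le : ∀ v : ZMod q, (S.filter fun s => s.2 = v).card ≤ p := by
    intro v
    by_contra hlt
    push_neg at hlt
    refine no_all_directions hpq hpair hcard ?_
    intro a ha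
    have hcardu : (univ : Finset (ZMod p)).card < (S.filter fun s => s.2 = v).card := by
      rwa [card_univ, ZMod.card]
    obtain ⟨s, hs, s', hs', hne, heq⟩ :=
      Finset.exists_ne_map_eq_of_card_lt_of_maps_to hcardu
        (f := fun s => s.1.1 * a.2 - s.1.2 * a.1) (fun _ _ => mem_univ _)
    have hsS := (Finset.mem_filter.1 hs).1
    have hs'S := (Finset.mem_filter.1 hs').1
    have h2 : s.2 = s'.2 := by rw [(Finset.mem_filter.1 hs).2, (Finset.mem_filter.1 hs').2]
    have hdet : (s.1 - s'.1).1 * a.2 = (s.1 - s'.1).2 * a.1 := by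
      simp only [Prod.fst_sub, Prod.snd_sub]
      linear_combination heq
    obtain ⟨c, hc⟩ := line_of_det ha (s.1 - s'.1) hdet
    have hsub1 : s.1 - s'.1 ≠ 0 := by
      intro h0
      apply hne
      have h3 : s.1 = s'.1 := by rwa [sub_eq_zero] at h0
      exact Prod.ext h3 h2
    have hc0 : c ≠ 0 := by rintro rfl; rw [zero_smul] at hc; exact hsub1 hc
    exact ⟨s, hsS, s', hs'S, hne, c, hc0,
      Prod.ext (by simpa [Prod.fst_sub] using hc) (by simp [Prod.snd_sub, h2])⟩
  have fiber_eq : ∀ v : ZMod q, (S.filter fun s => s.2 = v).card = p := by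
    have hsum : ∑ v : ZMod q, (S.filter fun s => s.2 = v).card = S.card :=
      (Finset.card_eq_sum_card_fiberwise (f := fun s : (ZMod p × ZMod p) × ZMod q => s.2) (t := univ)
        (fun _ _ => mem_univ _)).symm
    intro v
    by_contra hv
    have hvlt : (S.filter fun s => s.2 = v).card < p := lt_of_le_of_ne (fiber_le v) hv
    have hlt2 : ∑ v : ZMod q, (S.filter fun s => s.2 = v).card < ∑ _v : ZMod q, p :=
      Finset.sum_lt_sum (fun i _ => fiber_le i) ⟨v, mem_univ v, hvlt⟩
    rw [hsum, hcard, Finset.sum_const, card_univ, ZMod.card, smul_eq_mul, Nat.mul_comm q p]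
      at hlt2
    exact lt_irrefl _ hlt2
  have hA : ∃ a : ZMod p × ZMod p, a ≠ 0 ∧
      (∀ s ∈ S, ∀ s' ∈ S, s ≠ s' → ∀ c : ZMod p, c ≠ 0 →
        s - s' ≠ ((c • a, (0 : ZMod q)) : (ZMod p × ZMod p) × ZMod q)) := by
    by_contra hcon
    push_neg at hcon
    refine no_all_directions hpq hpair hcard ?_
    intro a ha
    obtain ⟨s, hs, s', hs', hne, c, hc, heq⟩ := hcon a ha
    exact ⟨s, hs, s', hs', hne, c, hc, heq⟩
  obtain ⟨a, ha0, havoid⟩ := hA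
  refine ⟨fiber_eq, a, ha0, havoid, ?_⟩
  set f : ↥S × ZMod p → (ZMod p × ZMod p) × ZMod q :=
    fun sc => sc.1.1 + ((sc.2 • a, (0 : ZMod q)) : (ZMod p × ZMod p) × ZMod q) with hf
  have hinj : Function.Injective f := by
    rintro ⟨⟨s, hs⟩, c⟩ ⟨⟨s', hs'⟩, c'⟩ h
    simp only [hf] at h
    by_cases hss : s = s'
    · subst hss
      have h2 : ((c • a, (0 : ZMod q)) : (ZMod p × ZMod p) × ZMod q) = (c' • a, 0) :=
        add_left_cancel h
      have h3 : c • a = c' • a := congrArg Prod.fst h2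
      have h4 : (c - c') • a = 0 := by rw [sub_smul, h3, sub_self]
      have h5 : c = c' := by
        by_contra hcc
        exact smul_prod_ne_zero (sub_ne_zero.mpr hcc) ha0 h4
      rw [h5]
    · exfalso
      have hcc : c' - c ≠ 0 := by
        intro h0
        have h6 : c' = c := by rwa [sub_eq_zero] at h0
        subst h6
        exact hss (add_right_cancel h)
      have h7 : s - s' = ((c' • a, (0 : ZMod q)) : (ZMod p × ZMod p) × ZMod q) - (c • a, 0) :=
        sub_eq_sub_iff_add_eq_add.mpr (by rw [h, add_comm])
      have h8 : s - s' = ((c' - c) • a, (0 : ZMod q)) := by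
        rw [h7]
        exact Prod.ext (by simp [sub_smul]) (by simp)
      exact havoid s hs s' hs' hss (c' - c) hcc h8
  have hcardeq : Fintype.card (↥S × ZMod p) = Fintype.card ((ZMod p × ZMod p) × ZMod q) := by
    rw [Fintype.card_prod, Fintype.card_coe, hcard, ZMod.card, Fintype.card_prod,
      Fintype.card_prod, ZMod.card, ZMod.card]
    ring
  have hbij : Function.Bijective f :=
    (Fintype.bijective_iff_injective_and_card f).mpr ⟨hinj, hcardeq⟩
  intro g
  obtain ⟨⟨⟨s, hs⟩, c⟩, hfg⟩ := hbij.2 g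
  exact ⟨s, hs, c, hfg⟩
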